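/- Let h_1, …, h_{δ+n} be linear forms on ℂ^{n+1} in general position (any n+1 of them linearly independent and no point lies on more than n of the hyperplanes), with δ ≥ 1. For d ≥ δ, the products h_I = ∏_{i∈I} h_i over all subsets I ⊆ {1,…,δ+n} with |I| = d are linearly independent in S^d(ℂ^{n+1})*. -/
import Mathlib


open MvPolynomial

/-- The linear form with coefficient vector `c`, as a polynomial. -/
noncomputable def linForm {n : ℕ} (c : Fin n → ℂ) : MvPolynomial (Fin n) ℂ :=
  ∑ i, MvPolynomial.C (c i) * MvPolynomial.X i

lemma eval_linForm {n : ℕ} (c P : Fin n → ℂ) :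
    MvPolynomial.eval P (linForm c) = ∑ k, c k * P k := by
  simp [linForm]

/-- The map sending a coefficient vector to the corresponding linear functional. -/
noncomputable def toDualMap (n : ℕ) :
    (Fin n → ℂ) →ₗ[ℂ] ((Fin n → ℂ) →ₗ[ℂ] ℂ) where
  toFun c := ∑ k, c k • LinearMap.proj k
  map_add' c d := by
    simp only [Pi.add_apply, add_smul]
    rw [Finset.sum_add_distrib]
  map_smul' a c := by
    simp only [Pi.smul_apply, smul_eq_mul, RingHom.id_apply, Finset.smul_sum, smul_smul]

lemma toDualMap_apply {n : ℕ} (c P : Fin n → ℂ) :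
    toDualMap n c P = ∑ k, c k * P k := by
  simp [toDualMap]

lemma toDualMap_ker (n : ℕ) : LinearMap.ker (toDualMap n) = ⊥ := by
  rw [LinearMap.ker_eq_bot']
  intro c hc
  funext j
  have := congrArg (fun f : (Fin n → ℂ) →ₗ[ℂ] ℂ => f (Pi.single j 1)) hc
  simp only [LinearMap.zero_apply] at this
  rw [toDualMap_apply] at this
  simpa [Pi.single_apply, Finset.sum_ite_eq'] using this

/-- Key existence lemma: a point vanishing on the complement forms and nonvanishing
on the forms in `I`. -/
lemma exists_eval_point (n m : ℕ) (hn : n + 1 ≤ m) (h : Fin m → (Fin (n + 1) → ℂ))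
    (hgen : ∀ T : Finset (Fin m), T.card = n + 1 →
      LinearIndependent ℂ (fun i : T => h i))
    (I : Finset (Fin m)) (hIc : Iᶜ.card ≤ n) :
    ∃ P : Fin (n + 1) → ℂ, (∀ j ∉ I, (∑ k, h j k * P k) = 0) ∧
      (∀ i ∈ I, (∑ k, h i k * P k) ≠ 0) := by
  set φ : Fin m → ((Fin (n + 1) → ℂ) →ₗ[ℂ] ℂ) := fun i => toDualMap (n + 1) (h i) with hφ
  set W : Submodule ℂ (Fin (n + 1) → ℂ) :=
    ⨅ j : {j : Fin m // j ∈ Iᶜ}, LinearMap.ker (φ j) with hW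
  -- For each i ∈ I, W is not contained in ker (φ i).
  have key : ∀ i ∈ I, ¬ (W ≤ LinearMap.ker (φ i)) := by
    intro i hi hle
    have hspan : φ i ∈ Submodule.span ℂ
        (Set.range (fun j : {j : Fin m // j ∈ Iᶜ} => φ j)) :=
      mem_span_of_iInf_ker_le_ker hle
    -- choose a superset T of insert i Iᶜ of cardinality n+1
    have hcard : (insert i Iᶜ).card ≤ n + 1 := by
      calc (insert i Iᶜ).card ≤ Iᶜ.card + 1 := Finset.card_insert_le _ _
        _ ≤ n + 1 := by omega
    obtain ⟨T, hsub, hT⟩ := Finset.exists_superset_card_eq hcard (by simpa using hn)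
    have hiT : i ∈ T := hsub (Finset.mem_insert_self i Iᶜ)
    have hind : LinearIndependent ℂ (fun j : T => φ j) :=
      (hgen T hT).map' (toDualMap (n + 1)) (toDualMap_ker (n + 1))
    have hnot : φ i ∉ Submodule.span ℂ
        ((fun j : T => φ j) '' {j : T | (j : Fin m) ∈ Iᶜ}) := by
      have hx : (⟨i, hiT⟩ : T) ∉ {j : T | (j : Fin m) ∈ Iᶜ} := by
        simp [Finset.mem_compl, hi]
      exact hind.notMem_span_image hx
    apply hnot
    have himg : (fun j : T => φ j) '' {j : T | (j : Fin m) ∈ Iᶜ} =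
        Set.range (fun j : {j : Fin m // j ∈ Iᶜ} => φ j) := by
      ext y
      constructor
      · rintro ⟨j, hj, rfl⟩
        exact ⟨⟨j, hj⟩, rfl⟩
      · rintro ⟨⟨j, hj⟩, rfl⟩
        exact ⟨⟨j, hsub (Finset.mem_insert_of_mem hj)⟩, hj, rfl⟩
    rw [himg]
    exact hspan
  -- the union over i ∈ I of (ker φ i ⊓ W), viewed inside W, is not all of W
  have hunion : (⋃ i : {i : Fin m // i ∈ I},
      ((LinearMap.ker (φ i)).comap W.subtype : Set W)) ≠ Set.univ := by
    intro hcov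
    obtain ⟨i, hi⟩ := Subspace.exists_eq_top_of_iUnion_eq_univ hcov
    apply key i i.2
    intro w hw
    have : (⟨w, hw⟩ : W) ∈ (LinearMap.ker (φ i)).comap W.subtype := by
      rw [hi]; trivial
    simpa using this
  rw [Set.ne_univ_iff_exists_notMem] at hunion
  obtain ⟨w, hw⟩ := hunion
  simp only [Set.mem_iUnion, not_exists, SetLike.mem_coe, Submodule.mem_comap,
    LinearMap.mem_ker, Submodule.coe_subtype] at hw
  refine ⟨(w : Fin (n + 1) → ℂ), ?_, ?_⟩
  · intro j hj
    have hwW : (w : Fin (n + 1) → ℂ) ∈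
        ⨅ j : {j : Fin m // j ∈ Iᶜ}, LinearMap.ker (φ j) := w.2
    rw [Submodule.mem_iInf] at hwW
    have := hwW ⟨j, Finset.mem_compl.2 hj⟩
    rw [LinearMap.mem_ker] at this
    rw [← toDualMap_apply]
    exact this
  · intro i hi hzero
    exact hw ⟨i, hi⟩ (by rw [← toDualMap_apply (h i) w] at hzero; exact hzero)

/-- Let `h_1, …, h_{δ+n}` be linear forms on `ℂ^{n+1}` in general position (any `n+1` of them
linearly independent), with `δ ≥ 1`.  For `d ≥ δ`, the products `h_I = ∏_{i∈I} h_i` over all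
subsets `I ⊆ {1,…,δ+n}` with `|I| = d` are linearly independent in `S^d(ℂ^{n+1})^*`. -/
theorem prods_linearIndependent (n δ d : ℕ) (hδ : 1 ≤ δ) (hd : δ ≤ d)
    (h : Fin (δ + n) → (Fin (n + 1) → ℂ))
    (hgen : ∀ T : Finset (Fin (δ + n)), T.card = n + 1 →
      LinearIndependent ℂ (fun i : T => h i)) :
    LinearIndependent ℂ (fun I : {I : Finset (Fin (δ + n)) // I.card = d} =>
      ∏ i ∈ I.1, linForm (h i)) := by
  rw [Fintype.linearIndependent_iff]
  intro g hg I₀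
  -- the complement of I₀ has at most n elements
  have hIc : (I₀.1)ᶜ.card ≤ n := by
    have h1 : (I₀.1)ᶜ.card = (δ + n) - d := by
      rw [Finset.card_compl, I₀.2, Fintype.card_fin]
    omega
  obtain ⟨P, hP0, hP1⟩ := exists_eval_point n (δ + n) (by omega) h hgen I₀.1 hIc
  have hev := congrArg (MvPolynomial.eval P) hg
  simp only [map_sum, map_zero, MvPolynomial.smul_eq_C_mul, map_mul, map_prod,
    MvPolynomial.eval_C, eval_linForm] at hev
  -- all terms except I₀ vanish
  rw [Finset.sum_eq_single I₀ ?_ (by intro hI; exact absurd (Finset.mem_univ I₀) hI)] at hev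
  · have hprod : (∏ i ∈ I₀.1, ∑ k, h i k * P k) ≠ 0 := by
      rw [Finset.prod_ne_zero_iff]
      exact fun i hi => hP1 i hi
    exact (mul_eq_zero.1 hev).resolve_right hprod
  · intro J _ hJ
    have hne : ¬ (J.1 ⊆ I₀.1) := by
      intro hsub
      exact hJ (Subtype.ext (Finset.eq_of_subset_of_card_le hsub (by rw [J.2, I₀.2])))
    obtain ⟨j, hjJ, hjI⟩ := Finset.not_subset.1 hne
    rw [Finset.prod_eq_zero hjJ (hP0 j hjI), mul_zero]
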